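/- Let n ≥ 1 and let f : (−∞,0) × ℝⁿ → ℝ be a smooth positive solution of the backward heat equation ∂f/∂t = −Δf that is ℤⁿ-periodic in the space variable. Set τ = −t > 0 and v = −ln f − (n/2)ln(4πτ). Then 2Δv − |∇v|² − 2n/τ ≤ 0 for all τ > 0 and all x ∈ ℝⁿ. -/

import Mathlib

open MeasureTheory Real Set Topology Filter

noncomputable section

/-- Partial derivative of `g` at `x` in the `i`-th coordinate direction. -/
def pd {n : ℕ} (i : Fin n) (g : (Fin n → ℝ) → ℝ) (x : Fin n → ℝ) : ℝ :=
  fderiv ℝ g x (Pi.single i 1)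

/-- Squared Euclidean norm of the (spatial) gradient of `g` at `x`. -/
def gradSq {n : ℕ} (g : (Fin n → ℝ) → ℝ) (x : Fin n → ℝ) : ℝ :=
  ∑ i, (pd i g x) ^ 2

/-- The (spatial) Laplacian of `g` at `x`. -/
def lap {n : ℕ} (g : (Fin n → ℝ) → ℝ) (x : Fin n → ℝ) : ℝ :=
  ∑ i, pd i (pd i g) x

/-- The `(i,j)` entry of the Hessian of `g` at `x`. -/
def hess {n : ℕ} (i j : Fin n) (g : (Fin n → ℝ) → ℝ) (x : Fin n → ℝ) : ℝ :=
  pd i (pd j g) x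

/-! ### Auxiliary infrastructure -/

section Aux

variable {n : ℕ}

/-- Directional derivative of a function on `ℝ × ℝⁿ`. -/
def Dd (e : ℝ × (Fin n → ℝ)) (G : ℝ × (Fin n → ℝ) → ℝ) (p : ℝ × (Fin n → ℝ)) : ℝ :=
  fderiv ℝ G p e

/-- The open set `(-∞,0) × ℝⁿ`. -/
def U (n : ℕ) : Set (ℝ × (Fin n → ℝ)) := Set.Iio 0 ×ˢ Set.univ

/-- Spatial directions. -/
def exi {n : ℕ} (i : Fin n) : ℝ × (Fin n → ℝ) := (0, Pi.single i 1)

/-- Time direction. -/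
def etd (n : ℕ) : ℝ × (Fin n → ℝ) := (1, 0)

lemma isOpen_U : IsOpen (U n) := isOpen_Iio.prod isOpen_univ

lemma mem_U {t : ℝ} {x : Fin n → ℝ} (ht : t < 0) : (t, x) ∈ U n := ⟨ht, trivial⟩

lemma mem_U_fst {p : ℝ × (Fin n → ℝ)} (hp : p ∈ U n) : p.1 < 0 := hp.1

lemma ddiff {G : ℝ × (Fin n → ℝ) → ℝ} (hG : ContDiffOn ℝ (⊤:ℕ∞) G (U n))
    {p} (hp : p ∈ U n) : DifferentiableAt ℝ G p :=
  (hG.contDiffAt (isOpen_U.mem_nhds hp)).differentiableAt (by simp)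

lemma dd_smooth {G : ℝ × (Fin n → ℝ) → ℝ} (hG : ContDiffOn ℝ (⊤:ℕ∞) G (U n)) (e) :
    ContDiffOn ℝ (⊤:ℕ∞) (Dd e G) (U n) :=
  (hG.fderiv_of_isOpen isOpen_U (le_of_eq rfl)).clm_apply contDiffOn_const

lemma dd_comm {G : ℝ × (Fin n → ℝ) → ℝ} (hG : ContDiffOn ℝ (⊤:ℕ∞) G (U n))
    {p} (hp : p ∈ U n) (a b) : Dd a (Dd b G) p = Dd b (Dd a G) p := by
  have hga : ContDiffAt ℝ (⊤:ℕ∞) G p := hG.contDiffAt (isOpen_U.mem_nhds hp)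
  have hsymm : IsSymmSndFDerivAt ℝ G p := hga.isSymmSndFDerivAt (by simp; exact WithTop.coe_le_coe.mpr (le_top : (2:ℕ∞) ≤ ⊤))
  have hd : DifferentiableAt ℝ (fderiv ℝ G) p :=
    (hga.fderiv_right (m := (⊤:ℕ∞)) (le_of_eq rfl)).differentiableAt (by simp)
  have key : ∀ c d : ℝ × (Fin n → ℝ), Dd c (Dd d G) p = fderiv ℝ (fderiv ℝ G) p c d := by
    intro c d
    have h1 : Dd d G = fun q => (fderiv ℝ G q) d := rfl
    rw [Dd, h1]
    rw [fderiv_clm_apply hd (differentiableAt_const d)]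
    simp
  rw [key, key, hsymm a b]

lemma hasFDerivAt_slice {G : ℝ × (Fin n → ℝ) → ℝ} {t : ℝ} {x : Fin n → ℝ}
    (h : DifferentiableAt ℝ G (t, x)) :
    HasFDerivAt (fun y => G (t, y))
      ((fderiv ℝ G (t, x)).comp (ContinuousLinearMap.inr ℝ ℝ (Fin n → ℝ))) x := by
  have hι : HasFDerivAt (fun y : Fin n → ℝ => ((t, y) : ℝ × (Fin n → ℝ)))
      (ContinuousLinearMap.inr ℝ ℝ (Fin n → ℝ)) x :=
    (hasFDerivAt_const t x).prodMk (hasFDerivAt_id x)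
  exact h.hasFDerivAt.comp x hι

lemma pd_slice {G : ℝ × (Fin n → ℝ) → ℝ} {t : ℝ} {x : Fin n → ℝ}
    (h : DifferentiableAt ℝ G (t, x)) (i : Fin n) :
    pd i (fun y => G (t, y)) x = Dd (exi i) G (t, x) := by
  rw [pd, (hasFDerivAt_slice h).fderiv]; rfl

lemma deriv_slice {G : ℝ × (Fin n → ℝ) → ℝ} {t : ℝ} {x : Fin n → ℝ}
    (h : DifferentiableAt ℝ G (t, x)) :
    deriv (fun s => G (s, x)) t = Dd (etd n) G (t, x) := by
  have hι : HasDerivAt (fun s : ℝ => ((s, x) : ℝ × (Fin n → ℝ))) ((1 : ℝ), (0 : Fin n → ℝ)) t :=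
    (hasDerivAt_id t).prodMk (hasDerivAt_const t x)
  have := h.hasFDerivAt.comp_hasDerivAt t hι
  exact this.deriv

lemma hasDerivAt_time_slice {G : ℝ × (Fin n → ℝ) → ℝ} {t : ℝ} {x : Fin n → ℝ}
    (h : DifferentiableAt ℝ G (t, x)) :
    HasDerivAt (fun s => G (s, x)) (Dd (etd n) G (t, x)) t := by
  have hι : HasDerivAt (fun s : ℝ => ((s, x) : ℝ × (Fin n → ℝ))) ((1 : ℝ), (0 : Fin n → ℝ)) t :=
    (hasDerivAt_id t).prodMk (hasDerivAt_const t x)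
  exact h.hasFDerivAt.comp_hasDerivAt t hι

lemma dd_congr {A B : ℝ × (Fin n → ℝ) → ℝ} (h : ∀ q ∈ U n, A q = B q)
    {p} (hp : p ∈ U n) (e) : Dd e A p = Dd e B p := by
  have hAB : A =ᶠ[nhds p] B := Filter.eventuallyEq_of_mem (isOpen_U.mem_nhds hp) h
  rw [Dd, Dd, hAB.fderiv_eq]

lemma dd_add {A B : ℝ × (Fin n → ℝ) → ℝ} {p} (hA : DifferentiableAt ℝ A p)
    (hB : DifferentiableAt ℝ B p) (e) :
    Dd e (fun q => A q + B q) p = Dd e A p + Dd e B p := by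
  rw [Dd, fderiv_fun_add hA hB]; rfl

lemma dd_neg {A : ℝ × (Fin n → ℝ) → ℝ} {p} (e) :
    Dd e (fun q => -A q) p = -Dd e A p := by
  rw [Dd, fderiv_fun_neg]; rfl

lemma dd_sub {A B : ℝ × (Fin n → ℝ) → ℝ} {p} (hA : DifferentiableAt ℝ A p)
    (hB : DifferentiableAt ℝ B p) (e) :
    Dd e (fun q => A q - B q) p = Dd e A p - Dd e B p := by
  rw [Dd, fderiv_fun_sub hA hB]; rfl

lemma dd_mul {A B : ℝ × (Fin n → ℝ) → ℝ} {p} (hA : DifferentiableAt ℝ A p)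
    (hB : DifferentiableAt ℝ B p) (e) :
    Dd e (fun q => A q * B q) p = A p * Dd e B p + B p * Dd e A p := by
  rw [Dd, fderiv_fun_mul hA hB]; simp [Dd, smul_eq_mul]

lemma dd_const_mul {A : ℝ × (Fin n → ℝ) → ℝ} {p} (hA : DifferentiableAt ℝ A p) (c : ℝ) (e) :
    Dd e (fun q => c * A q) p = c * Dd e A p := by
  rw [Dd, fderiv_const_mul hA c]; simp [Dd, smul_eq_mul]

lemma dd_sq {A : ℝ × (Fin n → ℝ) → ℝ} {p} (hA : DifferentiableAt ℝ A p) (e) :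
    Dd e (fun q => (A q)^2) p = 2 * A p * Dd e A p := by
  have h : (fun q => (A q)^2) = fun q => A q * A q := funext fun q => sq (A q)
  rw [h, dd_mul hA hA]; ring

lemma dd_sum {A : Fin n → (ℝ × (Fin n → ℝ)) → ℝ} {p}
    (hA : ∀ i, DifferentiableAt ℝ (A i) p) (e) :
    Dd e (fun q => ∑ i, A i q) p = ∑ i, Dd e (A i) p := by
  rw [Dd, fderiv_fun_sum (fun i _ => hA i)]; simp [Dd]

lemma dd_log {A : ℝ × (Fin n → ℝ) → ℝ} {p} (hA : DifferentiableAt ℝ A p)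
    (hpos : A p ≠ 0) (e) :
    Dd e (fun q => Real.log (A q)) p = Dd e A p / A p := by
  rw [Dd, (hA.hasFDerivAt.log hpos).fderiv]; simp [Dd, smul_eq_mul]; ring

lemma dd_exp {A : ℝ × (Fin n → ℝ) → ℝ} {p} (hA : DifferentiableAt ℝ A p) (e) :
    Dd e (fun q => Real.exp (A q)) p = Real.exp (A p) * Dd e A p := by
  rw [Dd, (hA.hasFDerivAt.exp).fderiv]; simp [Dd, smul_eq_mul]

lemma dd_translate {A : ℝ × (Fin n → ℝ) → ℝ} {p c : ℝ × (Fin n → ℝ)}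
    (hA : DifferentiableAt ℝ A (p + c)) (e) :
    Dd e (fun q => A (q + c)) p = Dd e A (p + c) := by
  have h : HasFDerivAt (fun q : ℝ × (Fin n → ℝ) => A (q + c)) (fderiv ℝ A (p + c)) p := by
    have := hA.hasFDerivAt.comp p ((hasFDerivAt_id p).add_const c)
    simpa [Function.comp_def] using this
  rw [Dd, h.fderiv]; rfl

/-- If `A` is periodic on `U` under translation by `c` (with `c.1 = 0`), so are its
directional derivatives. -/
lemma dd_per {A : ℝ × (Fin n → ℝ) → ℝ} (hA : ContDiffOn ℝ (⊤:ℕ∞) A (U n))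
    {c : ℝ × (Fin n → ℝ)} (hc1 : c.1 = 0) (hAper : ∀ q ∈ U n, A (q + c) = A q) :
    ∀ p ∈ U n, ∀ e, Dd e A (p + c) = Dd e A p := by
  intro p hp e
  have hpc : p + c ∈ U n := by
    refine ⟨?_, trivial⟩
    show (p + c).1 < 0
    rw [Prod.fst_add, hc1, add_zero]
    exact hp.1
  calc Dd e A (p + c) = Dd e (fun q => A (q + c)) p := (dd_translate (ddiff hA hpc) e).symm
    _ = Dd e A p := dd_congr hAper hp e

lemma deriv_nonneg_left_endpoint {g : ℝ → ℝ} {d a b : ℝ} (hd : HasDerivAt g d a)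
    (hab : a < b) (hmin : ∀ s ∈ Icc a b, g a ≤ g s) : 0 ≤ d := by
  have h0 : HasDerivWithinAt g d (Ioi a) a := hd.hasDerivWithinAt
  rw [hasDerivWithinAt_iff_tendsto_slope] at h0
  have hsub : Ioi a \ {a} = Ioi a := by
    ext s; simp only [mem_diff, mem_Ioi, mem_singleton_iff]
    exact ⟨fun h => h.1, fun h => ⟨h, ne_of_gt h⟩⟩
  rw [hsub] at h0
  refine ge_of_tendsto h0 ?_
  filter_upwards [Ioc_mem_nhdsGT_of_mem (Set.left_mem_Ico.mpr hab)] with s hs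
  have h1 : g a ≤ g s := hmin s ⟨le_of_lt hs.1, hs.2⟩
  have h2 : 0 < s - a := by linarith [hs.1]
  simp only [slope_def_field]
  exact div_nonneg (by linarith) (le_of_lt h2)

lemma second_deriv_test {g g' g'' : ℝ → ℝ}
    (h1 : ∀ s, HasDerivAt g (g' s) s) (h2 : ∀ s, HasDerivAt g' (g'' s) s)
    (hc : ContinuousAt g'' 0) (hmin : ∀ s, g 0 ≤ g s) : 0 ≤ g'' 0 := by
  by_contra hneg
  push_neg at hneg
  have hev : {s : ℝ | g'' s < 0} ∈ 𝓝 (0:ℝ) := hc.preimage_mem_nhds (Iio_mem_nhds hneg)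
  obtain ⟨ε, hε, hball⟩ := Metric.mem_nhds_iff.mp hev
  have hIoo : ∀ s ∈ Ioo (-ε) ε, g'' s < 0 := by
    intro s hs
    apply hball
    rw [Metric.mem_ball, Real.dist_eq, sub_zero, abs_lt]
    exact ⟨hs.1, hs.2⟩
  set c := ε / 2 with hc_def
  have hc0 : 0 < c := by positivity
  have hanti : StrictAntiOn g' (Icc (-c) c) := by
    apply strictAntiOn_of_deriv_neg (convex_Icc _ _)
    · exact fun s _ => ((h2 s).differentiableAt.continuousAt).continuousWithinAt
    · intro s hs
      rw [interior_Icc] at hs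
      rw [(h2 s).deriv]
      exact hIoo s ⟨by linarith [hs.1], by linarith [hs.2]⟩
  have hg'0 : g' 0 = 0 := by
    have hloc : IsLocalMin g 0 := Filter.Eventually.of_forall hmin
    exact hloc.hasDerivAt_eq_zero (h1 0)
  have hg'neg : ∀ s ∈ Ioo (-c) (0:ℝ), 0 < g' s := by
    intro s hs
    have := hanti (by constructor <;> [linarith [hs.1]; linarith [hs.2, hc0]] : s ∈ Icc (-c) c)
      (by constructor <;> simp [le_of_lt hc0] : (0:ℝ) ∈ Icc (-c) c) hs.2
    rw [hg'0] at this
    exact this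
  have hmono : StrictMonoOn g (Icc (-(c/2)) 0) := by
    apply strictMonoOn_of_deriv_pos (convex_Icc _ _)
    · exact fun s _ => ((h1 s).differentiableAt.continuousAt).continuousWithinAt
    · intro s hs
      rw [interior_Icc] at hs
      rw [(h1 s).deriv]
      exact hg'neg s ⟨by linarith [hs.1], hs.2⟩
  have hlt : g (-(c/2)) < g 0 := by
    apply hmono (by constructor <;> [linarith; linarith] : (-(c/2):ℝ) ∈ Icc (-(c/2)) 0)
      (by constructor <;> [linarith; linarith] : (0:ℝ) ∈ Icc (-(c/2)) 0) (by linarith)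
  exact absurd (hmin (-(c/2))) (by linarith)

end Aux

/-! ### Main computations -/

section Main

variable {n : ℕ} {f : ℝ → (Fin n → ℝ) → ℝ}

/-- Heat equation in two-variable form. -/
lemma heat2 (hF2 : ContDiffOn ℝ (⊤:ℕ∞) (fun p : ℝ × (Fin n → ℝ) => f p.1 p.2) (U n))
    (hbheat : ∀ t < (0:ℝ), ∀ x : Fin n → ℝ, deriv (fun s => f s x) t = -lap (f t) x) :
    ∀ p ∈ U n, Dd (etd n) (fun p : ℝ × (Fin n → ℝ) => f p.1 p.2) p
      = -∑ i, Dd (exi i) (Dd (exi i) (fun p : ℝ × (Fin n → ℝ) => f p.1 p.2)) p := by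
  set F2 : ℝ × (Fin n → ℝ) → ℝ := fun p => f p.1 p.2 with hF2def
  rintro ⟨t, x⟩ hp
  have ht : t < 0 := hp.1
  have h1 : Dd (etd n) F2 (t, x) = deriv (fun s => f s x) t :=
    (deriv_slice (ddiff hF2 hp)).symm
  rw [h1, hbheat t ht x, lap, neg_inj]
  refine Finset.sum_congr rfl fun i _ => ?_
  have e1 : pd i (f t) = fun y => Dd (exi i) F2 (t, y) := by
    funext y
    exact pd_slice (ddiff hF2 (mem_U ht)) i
  rw [e1]
  exact pd_slice (ddiff (dd_smooth hF2 (exi i)) hp) i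

/-- Derivatives of `F2` in terms of `H = log F2`. -/
lemma dF2_eq {F2 H : ℝ × (Fin n → ℝ) → ℝ} (hF2 : ContDiffOn ℝ (⊤:ℕ∞) F2 (U n))
    (hH : ContDiffOn ℝ (⊤:ℕ∞) H (U n))
    (hEH : ∀ q ∈ U n, F2 q = Real.exp (H q)) :
    ∀ e, ∀ p ∈ U n, Dd e F2 p = F2 p * Dd e H p := by
  intro e p hp
  rw [dd_congr hEH hp e, dd_exp (ddiff hH hp) e, ← hEH p hp]

/-- The PDE satisfied by `H = log F2`. -/
lemma heatH {F2 H : ℝ × (Fin n → ℝ) → ℝ} (hF2 : ContDiffOn ℝ (⊤:ℕ∞) F2 (U n))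
    (hH : ContDiffOn ℝ (⊤:ℕ∞) H (U n))
    (hEH : ∀ q ∈ U n, F2 q = Real.exp (H q))
    (hpos : ∀ q ∈ U n, 0 < F2 q)
    (hheat : ∀ p ∈ U n, Dd (etd n) F2 p = -∑ i, Dd (exi i) (Dd (exi i) F2) p) :
    ∀ p ∈ U n, Dd (etd n) H p
      = -(∑ i, Dd (exi i) (Dd (exi i) H) p) - ∑ i, (Dd (exi i) H p)^2 := by
  intro p hp
  have hne : F2 p ≠ 0 := ne_of_gt (hpos p hp)
  have hDDF2 : ∀ i, Dd (exi i) (Dd (exi i) F2) p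
      = F2 p * (Dd (exi i) (Dd (exi i) H) p + (Dd (exi i) H p)^2) := by
    intro i
    have h1 : Dd (exi i) (Dd (exi i) F2) p
        = Dd (exi i) (fun q => F2 q * Dd (exi i) H q) p :=
      dd_congr (fun q hq => dF2_eq hF2 hH hEH (exi i) q hq) hp (exi i)
    rw [h1, dd_mul (ddiff hF2 hp) (ddiff (dd_smooth hH (exi i)) hp),
      dF2_eq hF2 hH hEH (exi i) p hp]
    ring
  have h2 : F2 p * Dd (etd n) H p
      = F2 p * (-(∑ i, Dd (exi i) (Dd (exi i) H) p) - ∑ i, (Dd (exi i) H p)^2) := by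
    rw [← dF2_eq hF2 hH hEH (etd n) p hp, hheat p hp]
    have h3 : ∀ i ∈ Finset.univ, Dd (exi i) (Dd (exi i) F2) p
        = F2 p * (Dd (exi i) (Dd (exi i) H) p + (Dd (exi i) H p)^2) := fun i _ => hDDF2 i
    rw [Finset.sum_congr rfl h3, ← Finset.mul_sum, Finset.sum_add_distrib]
    ring
  exact mul_left_cancel₀ hne h2

end Main

section Evol

variable {n : ℕ}

/-- Evolution equation for `W = Δ H`. -/
lemma evolW {H : ℝ × (Fin n → ℝ) → ℝ} (hH : ContDiffOn ℝ (⊤:ℕ∞) H (U n))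
    (hHt : ∀ p ∈ U n, Dd (etd n) H p
      = -(∑ i, Dd (exi i) (Dd (exi i) H) p) - ∑ i, (Dd (exi i) H p)^2) :
    ∀ p ∈ U n,
      Dd (etd n) (fun q => ∑ i, Dd (exi i) (Dd (exi i) H) q) p
        = -(∑ i, Dd (exi i) (Dd (exi i) (fun q => ∑ k, Dd (exi k) (Dd (exi k) H) q)) p)
          - 2 * (∑ j, Dd (exi j) H p
              * Dd (exi j) (fun q => ∑ k, Dd (exi k) (Dd (exi k) H) q) p)
          - 2 * (∑ i, ∑ j, (Dd (exi i) (Dd (exi j) H) p)^2) := by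
  set W : ℝ × (Fin n → ℝ) → ℝ := fun q => ∑ k, Dd (exi k) (Dd (exi k) H) q with hWdef
  set S : ℝ × (Fin n → ℝ) → ℝ := fun q => ∑ j, (Dd (exi j) H q)^2 with hSdef
  have hW : ContDiffOn ℝ (⊤:ℕ∞) W (U n) := by
    apply ContDiffOn.sum
    intro k _
    exact dd_smooth (dd_smooth hH (exi k)) (exi k)
  have hS : ContDiffOn ℝ (⊤:ℕ∞) S (U n) := by
    apply ContDiffOn.sum
    intro j _
    exact (dd_smooth hH (exi j)).pow 2
  intro p hp
  -- the right-hand side of the PDE for `H`, as a function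
  have hHt' : ∀ q ∈ U n, Dd (etd n) H q = -W q - S q := hHt
  -- Step A : first spatial derivative of `-W - S` on `U`
  have stepA : ∀ i, ∀ q ∈ U n, Dd (exi i) (fun r => -W r - S r) q
      = -(Dd (exi i) W q)
        - ∑ j, 2 * (Dd (exi j) H q * Dd (exi i) (Dd (exi j) H) q) := by
    intro i q hq
    rw [dd_sub ((ddiff hW hq).fun_neg) (ddiff hS hq), dd_neg]
    congr 1
    rw [hSdef]
    rw [dd_sum (A := fun j q => Dd (exi j) H q ^ 2) (fun j => (ddiff (dd_smooth hH (exi j)) hq).pow 2)]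
    refine Finset.sum_congr rfl fun j _ => ?_
    rw [dd_sq (ddiff (dd_smooth hH (exi j)) hq)]
    ring
  -- triple derivative commutation : `∑ i, ∂i ∂i ∂j H = ∂j W`
  have hDjW : ∀ j, Dd (exi j) W p = ∑ i, Dd (exi i) (Dd (exi i) (Dd (exi j) H)) p := by
    intro j
    rw [hWdef]
    rw [dd_sum (fun i => ddiff (dd_smooth (dd_smooth hH (exi i)) (exi i)) hp)]
    refine Finset.sum_congr rfl fun i _ => ?_
    rw [dd_comm (dd_smooth hH (exi i)) hp (exi j) (exi i)]
    exact dd_congr (fun q hq => dd_comm hH hq (exi j) (exi i)) hp (exi i)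
  -- main computation of `∂t W`
  have main : Dd (etd n) W p
      = ∑ i, (-(Dd (exi i) (Dd (exi i) W) p)
          - ∑ j, 2 * (Dd (exi j) H p * Dd (exi i) (Dd (exi i) (Dd (exi j) H)) p
              + Dd (exi i) (Dd (exi j) H) p * Dd (exi i) (Dd (exi j) H) p)) := by
    rw [hWdef]
    rw [dd_sum (A := fun k q => Dd (exi k) (Dd (exi k) H) q)
      (fun k => ddiff (dd_smooth (dd_smooth hH (exi k)) (exi k)) hp)]
    refine Finset.sum_congr rfl fun i _ => ?_
    -- commute ∂t inside twice
    have c1 : Dd (etd n) (Dd (exi i) (Dd (exi i) H)) p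
        = Dd (exi i) (Dd (etd n) (Dd (exi i) H)) p :=
      dd_comm (dd_smooth hH (exi i)) hp (etd n) (exi i)
    have c2 : Dd (exi i) (Dd (etd n) (Dd (exi i) H)) p
        = Dd (exi i) (Dd (exi i) (Dd (etd n) H)) p :=
      dd_congr (fun q hq => dd_comm hH hq (etd n) (exi i)) hp (exi i)
    have c3 : Dd (exi i) (Dd (exi i) (Dd (etd n) H)) p
        = Dd (exi i) (Dd (exi i) (fun r => -W r - S r)) p := by
      refine dd_congr (fun q hq => ?_) hp (exi i)
      exact dd_congr hHt' hq (exi i)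
    have c4 : Dd (exi i) (Dd (exi i) (fun r => -W r - S r)) p
        = Dd (exi i) (fun q => -(Dd (exi i) W q)
            - ∑ j, 2 * (Dd (exi j) H q * Dd (exi i) (Dd (exi j) H) q)) p :=
      dd_congr (fun q hq => stepA i q hq) hp (exi i)
    have c5 : Dd (exi i) (fun q => -(Dd (exi i) W q)
            - ∑ j, 2 * (Dd (exi j) H q * Dd (exi i) (Dd (exi j) H) q)) p
        = -(Dd (exi i) (Dd (exi i) W) p)
          - ∑ j, 2 * (Dd (exi j) H p * Dd (exi i) (Dd (exi i) (Dd (exi j) H)) p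
              + Dd (exi i) (Dd (exi j) H) p * Dd (exi i) (Dd (exi j) H) p) := by
      have hd1 : DifferentiableAt ℝ (fun q => -(Dd (exi i) W q)) p :=
        (ddiff (dd_smooth hW (exi i)) hp).neg
      have hd2 : ∀ j, DifferentiableAt ℝ
          (fun q => 2 * (Dd (exi j) H q * Dd (exi i) (Dd (exi j) H) q)) p :=
        fun j => ((ddiff (dd_smooth hH (exi j)) hp).mul
          (ddiff (dd_smooth (dd_smooth hH (exi j)) (exi i)) hp)).const_mul 2
      have hd3 : DifferentiableAt ℝ
          (fun q => ∑ j, 2 * (Dd (exi j) H q * Dd (exi i) (Dd (exi j) H) q)) p := by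
        apply DifferentiableAt.fun_sum
        exact fun j _ => hd2 j
      rw [dd_sub hd1 hd3, dd_neg, dd_sum hd2]
      congr 1
      refine Finset.sum_congr rfl fun j _ => ?_
      rw [dd_const_mul ((ddiff (dd_smooth hH (exi j)) hp).fun_mul
          (ddiff (dd_smooth (dd_smooth hH (exi j)) (exi i)) hp)) 2,
        dd_mul (ddiff (dd_smooth hH (exi j)) hp)
          (ddiff (dd_smooth (dd_smooth hH (exi j)) (exi i)) hp)]
    rw [c1, c2, c3, c4, c5]
  rw [main]
  -- final rearrangement
  have alg : ∀ (A B : Fin n → ℝ) (T C : Fin n → Fin n → ℝ),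
      ∑ i, (-(A i) - ∑ j, 2 * (B j * T i j + C i j * C i j))
        = -(∑ i, A i) - 2 * (∑ j, B j * ∑ i, T i j) - 2 * (∑ i, ∑ j, (C i j)^2) := by
    intro A B T C
    have e0 : ∀ i, ∑ j, 2 * (B j * T i j + C i j * C i j)
        = (∑ j, 2 * (B j * T i j)) + ∑ j, 2 * (C i j)^2 := by
      intro i
      rw [← Finset.sum_add_distrib]
      refine Finset.sum_congr rfl fun j _ => ?_
      ring
    have e1 : ∑ i, ∑ j, 2 * (B j * T i j) = 2 * (∑ j, B j * ∑ i, T i j) := by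
      rw [Finset.sum_comm, Finset.mul_sum]
      refine Finset.sum_congr rfl fun j _ => ?_
      calc ∑ x, 2 * (B j * T x j) = 2 * ∑ x, B j * T x j :=
            (Finset.mul_sum Finset.univ (fun x => B j * T x j) 2).symm
        _ = 2 * (B j * ∑ i, T i j) := by
            rw [← Finset.mul_sum]
    calc ∑ i, (-(A i) - ∑ j, 2 * (B j * T i j + C i j * C i j))
        = ∑ i, (-(A i)) - ∑ i, ∑ j, 2 * (B j * T i j + C i j * C i j) :=
          Finset.sum_sub_distrib _ _
      _ = -(∑ i, A i) - ((∑ i, ∑ j, 2 * (B j * T i j)) + ∑ i, ∑ j, 2 * (C i j)^2) := by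
          rw [Finset.sum_neg_distrib]
          congr 1
          rw [← Finset.sum_add_distrib]
          exact Finset.sum_congr rfl fun i _ => e0 i
      _ = -(∑ i, A i) - 2 * (∑ j, B j * ∑ i, T i j) - 2 * (∑ i, ∑ j, (C i j)^2) := by
          rw [e1]
          simp only [← Finset.mul_sum]
          ring
  simp only [hDjW]
  exact alg (fun i => Dd (exi i) (Dd (exi i) W) p) (fun j => Dd (exi j) H p)
    (fun i j => Dd (exi i) (Dd (exi i) (Dd (exi j) H)) p)
    (fun i j => Dd (exi i) (Dd (exi j) H) p)

end Evol

section Wrap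

variable {n : ℕ}

/-- `W = Δ H` as a function. -/
def WW (H : ℝ × (Fin n → ℝ) → ℝ) : ℝ × (Fin n → ℝ) → ℝ :=
  fun q => ∑ k, Dd (exi k) (Dd (exi k) H) q

lemma WW_smooth {H : ℝ × (Fin n → ℝ) → ℝ} (hH : ContDiffOn ℝ (⊤:ℕ∞) H (U n)) :
    ContDiffOn ℝ (⊤:ℕ∞) (WW H) (U n) :=
  ContDiffOn.sum fun k _ => dd_smooth (dd_smooth hH (exi k)) (exi k)

lemma evolWW {H : ℝ × (Fin n → ℝ) → ℝ} (hH : ContDiffOn ℝ (⊤:ℕ∞) H (U n))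
    (hHt : ∀ p ∈ U n, Dd (etd n) H p
      = -(∑ i, Dd (exi i) (Dd (exi i) H) p) - ∑ i, (Dd (exi i) H p)^2) :
    ∀ p ∈ U n,
      Dd (etd n) (WW H) p
        = -(∑ i, Dd (exi i) (Dd (exi i) (WW H)) p)
          - 2 * (∑ j, Dd (exi j) H p * Dd (exi j) (WW H) p)
          - 2 * (∑ i, ∑ j, (Dd (exi i) (Dd (exi j) H) p)^2) := by
  unfold WW
  exact evolW hH hHt

lemma WW_per {H : ℝ × (Fin n → ℝ) → ℝ} (hH : ContDiffOn ℝ (⊤:ℕ∞) H (U n))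
    {c : ℝ × (Fin n → ℝ)} (hc1 : c.1 = 0)
    (hHper : ∀ q ∈ U n, H (q + c) = H q) :
    ∀ p ∈ U n, WW H (p + c) = WW H p := by
  intro p hp
  unfold WW
  refine Finset.sum_congr rfl fun k _ => ?_
  exact dd_per (dd_smooth hH (exi k)) hc1 (fun q hq => dd_per hH hc1 hHper q hq (exi k)) p hp (exi k)

lemma pd_neg_slice {G : ℝ × (Fin n → ℝ) → ℝ} {t : ℝ} {x : Fin n → ℝ}
    (hd : DifferentiableAt ℝ G (t, x)) (C : ℝ) (i : Fin n) :
    pd i (fun y => -G (t, y) - C) x = -Dd (exi i) G (t, x) := by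
  have hs := hasFDerivAt_slice hd
  have hF := (hs.fun_neg).sub_const C
  rw [pd, hF.fderiv]
  simp only [ContinuousLinearMap.neg_apply, ContinuousLinearMap.comp_apply]
  rfl

lemma pd_neg_slice' {G : ℝ × (Fin n → ℝ) → ℝ} {t : ℝ} {x : Fin n → ℝ}
    (hd : DifferentiableAt ℝ G (t, x)) (i : Fin n) :
    pd i (fun y => -G (t, y)) x = -Dd (exi i) G (t, x) := by
  have hs := hasFDerivAt_slice hd
  have hF := hs.fun_neg
  rw [pd, hF.fderiv]
  simp only [ContinuousLinearMap.neg_apply, ContinuousLinearMap.comp_apply]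
  rfl

end Wrap

section MaxPrinciple

/-- The Li–Yau type lower bound for `W = Δ log f`, proved by the parabolic maximum
principle on the torus. -/
lemma W_lower_bound {n : ℕ} (hn : 1 ≤ n) {H : ℝ × (Fin n → ℝ) → ℝ}
    (hH : ContDiffOn ℝ (⊤:ℕ∞) H (U n))
    (hHt : ∀ p ∈ U n, Dd (etd n) H p
      = -(∑ i, Dd (exi i) (Dd (exi i) H) p) - ∑ i, (Dd (exi i) H p)^2)
    (hHper : ∀ q ∈ U n, ∀ m : Fin n → ℤ, H (q + ((0:ℝ), fun i => (m i:ℝ))) = H q) :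
    ∀ t < (0:ℝ), ∀ x : Fin n → ℝ, -((n:ℝ)/2) ≤ (-t) * WW H (t, x) := by
  intro t ht x
  have hW : ContDiffOn ℝ (⊤:ℕ∞) (WW H) (U n) := WW_smooth hH
  have hWevol := evolWW hH hHt
  have hWper : ∀ p ∈ U n, ∀ m : Fin n → ℤ,
      WW H (p + ((0:ℝ), fun i => (m i:ℝ))) = WW H p :=
    fun p hp m => WW_per hH rfl (fun q hq => hHper q hq m) p hp
  -- Main claim, for each small ε > 0
  have hkey : ∀ ε ∈ Ioo (0:ℝ) (-t), -((n:ℝ)/2) ≤ (-t - ε) * WW H (t, x) := by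
    rintro ε ⟨hε0, hεt⟩
    by_contra hcon
    push_neg at hcon
    have htte : t < -ε := by linarith
    have hte0 : -ε < 0 := by linarith
    set Φ : ℝ × (Fin n → ℝ) → ℝ := fun p => (-p.1 - ε) * WW H p with hΦdef
    set K : Set (ℝ × (Fin n → ℝ)) := Icc t (-ε) ×ˢ Icc 0 1 with hKdef
    have hKU : K ⊆ U n := by
      rintro ⟨s, y⟩ ⟨hs, -⟩
      exact mem_U (lt_of_le_of_lt hs.2 hte0)
    have hKc : IsCompact K := isCompact_Icc.prod isCompact_Icc
    have hKne : K.Nonempty := ⟨(t, 0), ⟨le_refl t, le_of_lt htte⟩, ⟨le_refl _, zero_le_one⟩⟩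
    have hΦcont : ContinuousOn Φ K := by
      apply ContinuousOn.mul
      · exact (continuous_fst.neg.sub continuous_const).continuousOn
      · exact hW.continuousOn.mono hKU
    obtain ⟨pstar, hpK, hminOn⟩ := hKc.exists_isMinOn hKne hΦcont
    have hmin : ∀ q ∈ K, Φ pstar ≤ Φ q := fun q hq => hminOn hq
    have hts : pstar.1 ∈ Icc t (-ε) := hpK.1
    have hpsU : ∀ y : Fin n → ℝ, (pstar.1, y) ∈ U n :=
      fun y => mem_U (lt_of_le_of_lt hts.2 hte0)
    have hpstarU : pstar ∈ U n := hKU hpK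
    -- global spatial minimum by periodicity
    have hglob : ∀ s ∈ Icc t (-ε), ∀ y : Fin n → ℝ, Φ pstar ≤ Φ (s, y) := by
      intro s hs y
      have hsU : ∀ z : Fin n → ℝ, (s, z) ∈ U n := fun z => mem_U (lt_of_le_of_lt hs.2 hte0)
      set z : Fin n → ℝ := fun i => Int.fract (y i) with hz
      set m : Fin n → ℤ := fun i => ⌊y i⌋ with hm
      have hzy : (s, y) = ((s, z) + ((0:ℝ), fun i => ((m i : ℤ) : ℝ))) := by
        apply Prod.ext
        · show s = s + 0; rw [add_zero]
        · show y = z + fun i => ((m i : ℤ) : ℝ)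
          funext i
          show y i = Int.fract (y i) + (⌊y i⌋ : ℝ)
          rw [Int.fract_add_floor]
      have hz01 : z ∈ Icc (0 : Fin n → ℝ) 1 :=
        ⟨fun i => Int.fract_nonneg _, fun i => (Int.fract_lt_one _).le⟩
      have hWz : WW H (s, y) = WW H (s, z) := by
        rw [hzy]
        exact hWper (s, z) (hsU z) m
      calc Φ pstar ≤ Φ (s, z) := hmin (s, z) ⟨hs, hz01⟩
        _ = Φ (s, y) := by simp only [hΦdef, hWz]
    -- the minimum is negative, hence not on the final time slice
    have hΦneg : Φ pstar < -((n:ℝ)/2) :=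
      lt_of_le_of_lt (hglob t ⟨le_refl t, le_of_lt htte⟩ x) hcon
    have htne : pstar.1 < -ε := by
      rcases lt_or_eq_of_le hts.2 with h | h
      · exact h
      · exfalso
        have h0 : Φ pstar = 0 := by
          simp only [hΦdef]
          rw [h]
          ring
        rw [h0] at hΦneg
        have : (0:ℝ) ≤ (n:ℝ)/2 := by positivity
        linarith
    have ha0 : 0 < -pstar.1 - ε := by linarith
    have hΦp : Φ pstar = (-pstar.1 - ε) * WW H pstar := rfl
    have hWneg : WW H pstar < 0 := by
      nlinarith [hΦneg, hΦp, Nat.cast_nonneg (α := ℝ) n]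
    -- spatial minimality
    have hxmin : ∀ y : Fin n → ℝ, WW H pstar ≤ WW H (pstar.1, y) := by
      intro y
      have h1 := hglob pstar.1 hts y
      rw [hΦp] at h1
      have h2 : Φ (pstar.1, y) = (-pstar.1 - ε) * WW H (pstar.1, y) := rfl
      rw [h2] at h1
      exact (mul_le_mul_iff_right₀ ha0).mp h1
    -- first spatial derivatives vanish
    have hDW0 : ∀ i, Dd (exi i) (WW H) pstar = 0 := by
      intro i
      have hloc : IsLocalMin (fun y => WW H (pstar.1, y)) pstar.2 := by
        apply Filter.Eventually.of_forall
        intro y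
        show WW H (pstar.1, pstar.2) ≤ WW H (pstar.1, y)
        rw [Prod.mk.eta]
        exact hxmin y
      have h0 := hloc.fderiv_eq_zero
      have h1 := pd_slice (G := WW H) (t := pstar.1) (x := pstar.2)
        (by rw [Prod.mk.eta]; exact ddiff hW hpstarU) i
      rw [pd, h0] at h1
      simp only [ContinuousLinearMap.zero_apply] at h1
      rw [Prod.mk.eta] at h1
      exact h1.symm
    -- second spatial derivatives are nonnegative
    have hDDW : ∀ i, 0 ≤ Dd (exi i) (Dd (exi i) (WW H)) pstar := by
      intro i
      set L : ℝ → ℝ × (Fin n → ℝ) := fun s => (pstar.1, pstar.2 + s • (Pi.single i 1 : Fin n → ℝ)) with hL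
      have hL0 : L 0 = pstar := by
        simp only [hL, zero_smul, add_zero, Prod.mk.eta]
      have hLU : ∀ s, L s ∈ U n := fun s => hpsU _
      have hLd : ∀ s : ℝ, HasDerivAt L (exi i) s := by
        intro s
        have h1 : HasDerivAt (fun s : ℝ => pstar.2 + s • (Pi.single i 1 : Fin n → ℝ))
            ((1:ℝ) • (Pi.single i 1 : Fin n → ℝ)) s :=
          ((hasDerivAt_id s).smul_const ((Pi.single i 1 : Fin n → ℝ))).const_add pstar.2
        rw [one_smul] at h1
        exact (hasDerivAt_const s pstar.1).prodMk h1
      have hg : ∀ s, HasDerivAt (fun s => WW H (L s)) (Dd (exi i) (WW H) (L s)) s :=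
        fun s => (ddiff hW (hLU s)).hasFDerivAt.comp_hasDerivAt s (hLd s)
      have hg' : ∀ s, HasDerivAt (fun s => Dd (exi i) (WW H) (L s))
          (Dd (exi i) (Dd (exi i) (WW H)) (L s)) s :=
        fun s => (ddiff (dd_smooth hW (exi i)) (hLU s)).hasFDerivAt.comp_hasDerivAt s (hLd s)
      have hcont : ContinuousAt (fun s => Dd (exi i) (Dd (exi i) (WW H)) (L s)) 0 := by
        have hco : ContinuousAt (Dd (exi i) (Dd (exi i) (WW H))) (L 0) :=
          (dd_smooth (dd_smooth hW (exi i)) (exi i)).continuousOn.continuousAt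
            (isOpen_U.mem_nhds (hLU 0))
        exact hco.comp (hLd 0).continuousAt
      have hgmin : ∀ s, WW H (L 0) ≤ WW H (L s) := by
        intro s
        rw [hL0]
        exact hxmin _
      have := second_deriv_test hg hg' hcont hgmin
      rw [hL0] at this
      exact this
    -- time derivative is nonnegative at the minimum
    have hT : 0 ≤ -1 * WW H pstar + (-pstar.1 - ε) * Dd (etd n) (WW H) pstar := by
      have h2 : HasDerivAt (fun s => WW H (s, pstar.2)) (Dd (etd n) (WW H) (pstar.1, pstar.2))
          pstar.1 := hasDerivAt_time_slice (by rw [Prod.mk.eta]; exact ddiff hW hpstarU)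
      have h1 : HasDerivAt (fun s : ℝ => -s - ε) (-1) pstar.1 := by
        simpa using ((hasDerivAt_id pstar.1).neg.sub_const ε)
      have hdT : HasDerivAt (fun s => (-s - ε) * WW H (s, pstar.2))
          (-1 * WW H (pstar.1, pstar.2)
            + (-pstar.1 - ε) * Dd (etd n) (WW H) (pstar.1, pstar.2)) pstar.1 := h1.mul h2
      have hminT : ∀ s ∈ Icc pstar.1 (-ε),
          (-pstar.1 - ε) * WW H (pstar.1, pstar.2) ≤ (-s - ε) * WW H (s, pstar.2) := by
        intro s hs
        have h3 := hglob s ⟨le_trans hts.1 hs.1, hs.2⟩ pstar.2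
        rw [hΦp] at h3
        rw [Prod.mk.eta]
        exact h3
      have := deriv_nonneg_left_endpoint hdT htne (by
        intro s hs
        show (-pstar.1 - ε) * WW H (pstar.1, pstar.2) ≤ (-s - ε) * WW H (s, pstar.2)
        exact hminT s hs)
      rw [Prod.mk.eta] at this
      exact this
    -- Cauchy-Schwarz for the Hessian trace
    have hQ : (WW H pstar)^2 ≤ (n:ℝ) * (∑ i, ∑ j, (Dd (exi i) (Dd (exi j) H) pstar)^2) := by
      have h1 : (WW H pstar)^2 ≤ (n:ℝ) * ∑ i, (Dd (exi i) (Dd (exi i) H) pstar)^2 := by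
        have := sq_sum_le_card_mul_sum_sq
          (s := (Finset.univ : Finset (Fin n)))
          (f := fun i => Dd (exi i) (Dd (exi i) H) pstar)
        simpa [Finset.card_univ, WW] using this
      refine le_trans h1 ?_
      apply mul_le_mul_of_nonneg_left _ (Nat.cast_nonneg n)
      apply Finset.sum_le_sum
      intro i _
      exact Finset.single_le_sum (f := fun j => (Dd (exi i) (Dd (exi j) H) pstar)^2)
        (fun j _ => sq_nonneg _) (Finset.mem_univ i)
    -- assemble the contradiction
    have hE := hWevol pstar hpstarU
    have hZ : ∑ j, Dd (exi j) H pstar * Dd (exi j) (WW H) pstar = 0 := by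
      apply Finset.sum_eq_zero
      intro j _
      rw [hDW0 j, mul_zero]
    rw [hZ, mul_zero, sub_zero] at hE
    have hLW : 0 ≤ ∑ i, Dd (exi i) (Dd (exi i) (WW H)) pstar :=
      Finset.sum_nonneg fun i _ => hDDW i
    -- 0 ≤ -W + a * (-ΔW - 2Q) ≤ -W - 2a Q ≤ -W - (2a/n) W²
    have hQ0 : 0 ≤ ∑ i, ∑ j, (Dd (exi i) (Dd (exi j) H) pstar)^2 :=
      Finset.sum_nonneg fun i _ => Finset.sum_nonneg fun j _ => sq_nonneg _
    have hn0 : (0:ℝ) < (n:ℝ) := by exact_mod_cast Nat.pos_of_ne_zero (by omega)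
    have hm : (-pstar.1 - ε) * WW H pstar < -((n:ℝ)/2) := by rw [← hΦp]; exact hΦneg
    set a : ℝ := -pstar.1 - ε with hadef
    set Wp : ℝ := WW H pstar with hWpdef
    set DtW : ℝ := Dd (etd n) (WW H) pstar with hDtWdef
    set ΔW : ℝ := ∑ i, Dd (exi i) (Dd (exi i) (WW H)) pstar with hΔWdef
    set Q : ℝ := ∑ i, ∑ j, (Dd (exi i) (Dd (exi j) H) pstar)^2 with hQdef
    have s1 : 0 ≤ -Wp - 2*a*Q := by nlinarith [mul_nonneg ha0.le hLW]
    have s2 : a * Wp^2 ≤ a * ((n:ℝ) * Q) := mul_le_mul_of_nonneg_left hQ ha0.le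
    have s5 : 0 < (2*(a*Wp) + (n:ℝ)) * Wp := mul_pos_of_neg_of_neg (by linarith) hWneg
    nlinarith [s1, s2, s5, hn0]
  -- pass to the limit ε → 0⁺
  have h1 : Tendsto (fun ε : ℝ => (-t - ε) * WW H (t, x)) (𝓝[>] 0)
      (𝓝 ((-t - 0) * WW H (t, x))) := by
    apply Tendsto.mono_left _ nhdsWithin_le_nhds
    exact (tendsto_const_nhds.sub tendsto_id).mul tendsto_const_nhds
  have h2 : ∀ᶠ ε in 𝓝[>] (0:ℝ), -((n:ℝ)/2) ≤ (-t - ε) * WW H (t, x) := by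
    filter_upwards [Ioo_mem_nhdsGT_of_mem
      (⟨le_refl 0, by linarith⟩ : (0:ℝ) ∈ Ico 0 (-t))] with ε hε
    exact hkey ε hε
  have h3 := ge_of_tendsto h1 h2
  simpa using h3

end MaxPrinciple

/-- Proposition 5.2: for a positive periodic solution of the backward heat equation
(on `t < 0`, with `τ = −t`), `v = −ln f − (n/2)ln(4πτ)` satisfies
`2Δv − |∇v|² − 2n/τ ≤ 0`. -/
theorem backward_harnack_P_nonpos
    (n : ℕ) (hn : 1 ≤ n) (f : ℝ → (Fin n → ℝ) → ℝ)
    (hsmooth : ContDiffOn ℝ (⊤ : ℕ∞) (fun p : ℝ × (Fin n → ℝ) => f p.1 p.2)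
      (Set.Iio 0 ×ˢ Set.univ))
    (hpos : ∀ t < (0:ℝ), ∀ x : Fin n → ℝ, 0 < f t x)
    (hbheat : ∀ t < (0:ℝ), ∀ x : Fin n → ℝ, deriv (fun s => f s x) t = -lap (f t) x)
    (hper : ∀ t < (0:ℝ), ∀ x : Fin n → ℝ, ∀ m : Fin n → ℤ,
      f t (x + fun i => (m i : ℝ)) = f t x)
    (v : ℝ → (Fin n → ℝ) → ℝ)
    (hv : ∀ t x, v t x = -Real.log (f t x) - (n / 2 : ℝ) * Real.log (4 * π * (-t))) :
    ∀ t < (0:ℝ), ∀ x : Fin n → ℝ,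
      2 * lap (v t) x - gradSq (v t) x - 2 * n / (-t) ≤ 0 := by
  intro t ht x
  set H : ℝ × (Fin n → ℝ) → ℝ := fun q => Real.log (f q.1 q.2) with hHdef
  have hF2 : ContDiffOn ℝ (⊤:ℕ∞) (fun p : ℝ × (Fin n → ℝ) => f p.1 p.2) (U n) := hsmooth
  have hF2pos : ∀ q ∈ U n, 0 < (fun p : ℝ × (Fin n → ℝ) => f p.1 p.2) q :=
    fun q hq => hpos q.1 hq.1 q.2
  have hH : ContDiffOn ℝ (⊤:ℕ∞) H (U n) :=
    hF2.log (fun q hq => ne_of_gt (hF2pos q hq))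
  have hEH : ∀ q ∈ U n, (fun p : ℝ × (Fin n → ℝ) => f p.1 p.2) q = Real.exp (H q) :=
    fun q hq => (Real.exp_log (hF2pos q hq)).symm
  have hheat2 := heat2 (f := f) hsmooth hbheat
  have hHt := heatH hF2 hH hEH hF2pos hheat2
  have hHper : ∀ q ∈ U n, ∀ m : Fin n → ℤ,
      H (q + ((0:ℝ), fun i => (m i:ℝ))) = H q := by
    intro q hq m
    show Real.log (f (q.1 + 0) (q.2 + fun i => (m i:ℝ))) = Real.log (f q.1 q.2)
    rw [add_zero, hper q.1 hq.1 q.2 m]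
  have hbound := W_lower_bound hn hH hHt hHper t ht x
  -- identify `lap (v t)` and `gradSq (v t)`
  have hC : v t = fun y => -H (t, y) - (n / 2 : ℝ) * Real.log (4 * π * (-t)) :=
    funext fun y => hv t y
  have hpd1 : ∀ i : Fin n, pd i (v t) = fun y => -Dd (exi i) H (t, y) := by
    intro i
    funext y
    rw [hC]
    exact pd_neg_slice (ddiff hH (mem_U ht)) _ i
  have hlap : lap (v t) x = -(WW H (t, x)) := by
    have hterm : ∀ i : Fin n, pd i (pd i (v t)) x = -(Dd (exi i) (Dd (exi i) H) (t, x)) := by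
      intro i
      rw [hpd1 i]
      exact pd_neg_slice' (ddiff (dd_smooth hH (exi i)) (mem_U ht)) i
    rw [lap]
    calc ∑ i, pd i (pd i (v t)) x = ∑ i, -(Dd (exi i) (Dd (exi i) H) (t, x)) :=
          Finset.sum_congr rfl fun i _ => hterm i
      _ = -(∑ k, Dd (exi k) (Dd (exi k) H) (t, x)) := Finset.sum_neg_distrib _
      _ = -(WW H (t, x)) := rfl
  have hgs : 0 ≤ gradSq (v t) x := by
    rw [gradSq]
    exact Finset.sum_nonneg fun i _ => sq_nonneg _
  have hmt : (0:ℝ) < -t := by linarith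
  rw [hlap]
  have h5 : 2 * (-(WW H (t, x))) ≤ (n:ℝ)/(-t) := by
    rw [le_div_iff₀ hmt]
    nlinarith [hbound]
  have h7 : 0 ≤ (n:ℝ)/(-t) := div_nonneg (Nat.cast_nonneg n) hmt.le
  have h8 : 2*(n:ℝ)/(-t) = 2*((n:ℝ)/(-t)) := mul_div_assoc 2 _ _
  linarith [hgs, h5, h7]
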